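/- Under the hypotheses of the monotonicity theorem (c a convex plane curve of curvature k ≥ 0, c̃ a unit-speed curve in ℝⁿ⁺¹ with curvature ≤ k, ι the isometric inclusion associated to [s', s'']), for any s' ≤ s'₊ < s''₊ ≤ s'' one has ⟨c(s''₊) - c(s'₊), c(s'') - c(s')⟩ ≤ ⟨c̃(s''₊) - c̃(s'₊), ι(c(s'') - c(s'))⟩. In particular, taking s'₊ = s', s''₊ = s'': |c(s'') - c(s')|² ≤ ⟨c̃(s'') - c̃(s'), ι(c(s'') - c(s'))⟩. -/
import Mathlib


open scoped RealInnerProductSpace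

noncomputable def vec2 (x y : ℝ) : EuclideanSpace ℝ (Fin 2) := (WithLp.equiv 2 _).symm ![x, y]

/-- **Corollary of the monotonicity theorem.**  Under the hypotheses of Schur's monotonicity
theorem, with `ι` the isometric inclusion associated to `[s', s'']` (satisfying
`⟪Tt s - ι (T s), ι (c s'' - c s')⟫ ≥ 0` on `[s', s'']`), for all `s' ≤ s'₊ < s''₊ ≤ s''`
one has `⟪c s''₊ - c s'₊, c s'' - c s'⟫ ≤ ⟪ct s''₊ - ct s'₊, ι (c s'' - c s')⟫`, and in
particular `‖c s'' - c s'‖² ≤ ⟪ct s'' - ct s', ι (c s'' - c s')⟫`. -/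
theorem schur_monotonicity_corollary
    (n : ℕ) (hn : 1 ≤ n) (L : ℝ) (hL : 0 < L)
    (c : ℝ → EuclideanSpace ℝ (Fin 2)) (θ k : ℝ → ℝ)
    (T : ℝ → EuclideanSpace ℝ (Fin 2))
    (ct : ℝ → EuclideanSpace ℝ (Fin (n + 1)))
    (Tt Tt' : ℝ → EuclideanSpace ℝ (Fin (n + 1)))
    (hT : ∀ s, T s = vec2 (Real.cos (θ s)) (Real.sin (θ s)))
    (hc : ∀ s ∈ Set.Icc 0 L, HasDerivAt c (T s) s)
    (hθ : ∀ s ∈ Set.Icc 0 L, HasDerivAt θ (k s) s)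
    (hk : ∀ s ∈ Set.Icc 0 L, 0 ≤ k s)
    (hemb : Set.InjOn c (Set.Icc 0 L))
    (hct : ∀ s ∈ Set.Icc 0 L, HasDerivAt ct (Tt s) s)
    (hunit : ∀ s ∈ Set.Icc 0 L, ‖Tt s‖ = 1)
    (hTt : ∀ s ∈ Set.Icc 0 L, HasDerivAt Tt (Tt' s) s)
    (hcomp : ∀ s ∈ Set.Icc 0 L, ‖Tt' s‖ ≤ k s)
    (s' s'' : ℝ) (hs' : 0 ≤ s') (hss : s' < s'') (hs'' : s'' ≤ L)
    (ι : EuclideanSpace ℝ (Fin 2) →ₗᵢ[ℝ] EuclideanSpace ℝ (Fin (n + 1)))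
    -- ι is the isometric inclusion from the monotonicity theorem:
    (hι : ∀ s ∈ Set.Icc s' s'', 0 ≤ ⟪Tt s - ι (T s), ι (c s'' - c s')⟫) :
    (∀ s'p s''p, s' ≤ s'p → s'p < s''p → s''p ≤ s'' →
        ⟪c s''p - c s'p, c s'' - c s'⟫ ≤ ⟪ct s''p - ct s'p, ι (c s'' - c s')⟫) ∧
      ‖c s'' - c s'‖ ^ 2 ≤ ⟪ct s'' - ct s', ι (c s'' - c s')⟫ := by

  set v := c s'' - c s' with hv
  set w := ι v with hw
  have hsub : Set.Icc s' s'' ⊆ Set.Icc (0:ℝ) L := Set.Icc_subset_Icc hs' hs''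
  set g : ℝ → ℝ := fun s => ⟪ct s - ι (c s), w⟫ with hg
  have hgd : ∀ s ∈ Set.Icc s' s'', HasDerivAt g ⟪Tt s - ι (T s), w⟫ s := by
    intro s hs
    have h1 : HasDerivAt (fun s => ι (c s)) (ι (T s)) s :=
      (ι.toContinuousLinearMap.hasFDerivAt.comp_hasDerivAt s (hc s (hsub hs)))
    have h2 : HasDerivAt (fun s => ct s - ι (c s)) (Tt s - ι (T s)) s :=
      (hct s (hsub hs)).sub h1
    have h3 : HasDerivAt (fun s => ⟪w, ct s - ι (c s)⟫)
        ⟪w, Tt s - ι (T s)⟫ s :=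
      ((innerSL ℝ w).hasFDerivAt.comp_hasDerivAt s h2)
    simpa only [hg, real_inner_comm w] using h3
  have hmono : MonotoneOn g (Set.Icc s' s'') := by
    apply monotoneOn_of_deriv_nonneg (convex_Icc s' s'')
    · intro s hs
      exact (hgd s hs).continuousAt.continuousWithinAt
    · intro s hs
      rw [interior_Icc] at hs
      exact (hgd s (Set.Ioo_subset_Icc_self hs)).differentiableAt.differentiableWithinAt
    · intro s hs
      rw [interior_Icc] at hs
      rw [(hgd s (Set.Ioo_subset_Icc_self hs)).deriv]
      exact hι s (Set.Ioo_subset_Icc_self hs)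
  have key : ∀ s'p s''p, s' ≤ s'p → s'p ≤ s''p → s''p ≤ s'' →
      ⟪c s''p - c s'p, c s'' - c s'⟫ ≤ ⟪ct s''p - ct s'p, ι (c s'' - c s')⟫ := by
    intro a b ha hab hb
    have hga : a ∈ Set.Icc s' s'' := ⟨ha, hab.trans hb⟩
    have hgb : b ∈ Set.Icc s' s'' := ⟨ha.trans hab, hb⟩
    have := hmono hga hgb hab
    simp only [hg] at this
    rw [inner_sub_left, inner_sub_left] at this
    have heq : ∀ x, ⟪ι (c x), w⟫ = ⟪c x, v⟫ := fun x => ι.inner_map_map (c x) v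
    rw [heq a, heq b] at this
    have : ⟪c b, v⟫ - ⟪c a, v⟫ ≤ ⟪ct b, w⟫ - ⟪ct a, w⟫ := by linarith
    rw [inner_sub_left, inner_sub_left]
    exact this
  refine ⟨fun a b ha hab hb => key a b ha hab.le hb, ?_⟩
  have := key s' s'' le_rfl hss.le le_rfl
  rwa [← hv, real_inner_self_eq_norm_sq] at this
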